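/- In any connected component t of a W-graph that is optimal (minimizing the sum of V_{ij} − V_i over its directed edges among all W-graphs with the same number of sinks), the sink s of t attains the minimum potential over all states in t: V_s = min_{i ∈ t} V_i. -/

import Mathlib

open Finset

/-- A `W`-graph on the network `G` with sink set `W`: every non-sink state `i` has exactly
one outgoing arrow `i → next i` along an edge of `G`, sinks are encoded as fixed points of
`next`, and from every state some iterate of `next` reaches a sink (no cycles). -/
structure WGraph {V : Type*} (G : SimpleGraph V) (W : Finset V) where
  next : V → V
  adj_of_not_sink : ∀ i ∉ W, G.Adj i (next i)
  sink_fixed : ∀ i ∈ W, next i = i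
  absorbed : ∀ i : V, ∃ n : ℕ, next^[n] i ∈ W

/-- The cost `∑_{(i → j)} (V_{ij} - V_i)` of a `W`-graph, the sum running over its arrows. -/
def wcost {V : Type*} [Fintype V] [DecidableEq V] {G : SimpleGraph V} {W : Finset V}
    (Ve : Sym2 V → ℝ) (Vp : V → ℝ) (g : WGraph G W) : ℝ :=
  ∑ i ∈ Wᶜ, (Ve s(i, g.next i) - Vp i)

/-- The (undirected) edge set of the forest underlying a `W`-graph. -/
def wEdges {V : Type*} [Fintype V] [DecidableEq V] {G : SimpleGraph V} {W : Finset V}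
    (g : WGraph G W) : Finset (Sym2 V) :=
  Wᶜ.image fun i => s(i, g.next i)

/-- An optimal `W`-graph with `k` sinks: one minimizing the cost among all `W`-graphs
on `G` with `k` sinks. -/
def IsOptimalWGraph {V : Type*} [Fintype V] [DecidableEq V] (G : SimpleGraph V)
    (Ve : Sym2 V → ℝ) (Vp : V → ℝ) (k : ℕ) (W : Finset V) (g : WGraph G W) : Prop :=
  W.card = k ∧
    ∀ (W' : Finset V) (g' : WGraph G W'), W'.card = k →
      wcost Ve Vp g ≤ wcost Ve Vp g'

/-- Assumption 1 (genericness): all vertex potentials are distinct, all edge potentials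
(on edges of `G`) are distinct, and all differences `V_{ij} - V_k` are distinct. -/
def Generic {V : Type*} (G : SimpleGraph V) (Ve : Sym2 V → ℝ) (Vp : V → ℝ) : Prop :=
  Function.Injective Vp ∧
  (∀ e ∈ G.edgeSet, ∀ f ∈ G.edgeSet, Ve e = Ve f → e = f) ∧
  (∀ e ∈ G.edgeSet, ∀ f ∈ G.edgeSet, ∀ i j : V,
      Ve e - Vp i = Ve f - Vp j → e = f ∧ i = j)

/-- A minimum spanning tree of a weighted graph. -/
def IsMST {V : Type*} (G : SimpleGraph V) (c : Sym2 V → ℝ) (T : SimpleGraph V) : Prop :=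
  T.IsTree ∧ T ≤ G ∧
    ∀ T' : SimpleGraph V, T'.IsTree → T' ≤ G →
      (∑ᶠ e ∈ T.edgeSet, c e) ≤ ∑ᶠ e ∈ T'.edgeSet, c e

noncomputable def revNext {V : Type*} [DecidableEq V] (nx : V → V) (i : V) (n : ℕ) : V → V :=
  fun v => if h : ∃ m ∈ Finset.Icc 1 n, nx^[m] i = v then nx^[Exists.choose h - 1] i
           else if v = i then i else nx v

lemma revNext_pos {V : Type*} [DecidableEq V] (nx : V → V) (i : V) (n : ℕ) (v : V)
    (h : ∃ m ∈ Finset.Icc 1 n, nx^[m] i = v) :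
    revNext nx i n v = nx^[Exists.choose h - 1] i := dif_pos h

lemma revNext_neg {V : Type*} [DecidableEq V] (nx : V → V) (i : V) (n : ℕ) (v : V)
    (h : ¬ ∃ m ∈ Finset.Icc 1 n, nx^[m] i = v) (hv : v ≠ i) :
    revNext nx i n v = nx v := by
  unfold revNext; rw [dif_neg h, if_neg hv]

lemma revNext_i {V : Type*} [DecidableEq V] (nx : V → V) (i : V) (n : ℕ)
    (h : ¬ ∃ m ∈ Finset.Icc 1 n, nx^[m] i = i) :
    revNext nx i n i = i := by
  unfold revNext; rw [dif_neg h, if_pos rfl]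

/-- in any connected component of an optimal `W`-graph, the sink of that
component attains the minimal potential over all states of the component. -/
theorem optimal_wgraph_sink_min_potential {V : Type*} [Fintype V] [DecidableEq V]
    (G : SimpleGraph V) (hG : G.Connected) (Ve : Sym2 V → ℝ) (Vp : V → ℝ)
    (hgen : Generic G Ve Vp) (k : ℕ) (W : Finset V) (g : WGraph G W)
    (hopt : IsOptimalWGraph G Ve Vp k W g)
    (s : V) (hs : s ∈ W) (i : V) (hi : ∃ n : ℕ, g.next^[n] i = s) :
    Vp s ≤ Vp i := by
  classical
  by_cases hiW : i ∈ W
  · obtain ⟨n, hn⟩ := hi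
    rw [Function.iterate_fixed (g.sink_fixed i hiW) n] at hn
    rw [← hn]
  -- main case : i ∉ W
  have hsi : s ≠ i := fun h => hiW (h ▸ hs)
  set n := Nat.find hi with hndef
  have hn : g.next^[n] i = s := Nat.find_spec hi
  have hmin : ∀ m < n, g.next^[m] i ≠ s := fun m hm => Nat.find_min hi hm
  have hP0 : g.next^[0] i = i := rfl
  have hnpos : 0 < n := by
    rcases Nat.eq_zero_or_pos n with h0 | h; · exfalso; exact hsi (by rw [← hn, h0]; simp)
    exact h
  have hPsucc : ∀ m, g.next^[m + 1] i = g.next (g.next^[m] i) := fun m =>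
    Function.iterate_succ_apply' g.next m i
  have hWshift : ∀ m t, g.next^[m] i ∈ W → g.next^[m + t] i = g.next^[m] i := by
    intro m t hm
    induction t with
    | zero => rfl
    | succ t ih => rw [← Nat.add_assoc, hPsucc, ih, g.sink_fixed _ hm]
  have hPnotW : ∀ m < n, g.next^[m] i ∉ W := by
    intro m hm hmem
    have h1 := hWshift m (n - m) hmem
    rw [Nat.add_sub_cancel' hm.le] at h1
    exact hmin m hm (h1 ▸ hn)
  have haux : ∀ a b, a < b → b ≤ n → g.next^[a] i ≠ g.next^[b] i := by
    intro a b hab hbn heq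
    have hshift : ∀ t, g.next^[a + t] i = g.next^[b + t] i := by
      intro t; induction t with
      | zero => exact heq
      | succ t ih => rw [← Nat.add_assoc, ← Nat.add_assoc, hPsucc, hPsucc, ih]
    have h1 := hshift (n - b)
    rw [Nat.add_sub_cancel' hbn] at h1
    exact hmin (a + (n - b)) (by omega) (h1.trans hn)
  have hPinj : ∀ a b, a ≤ n → b ≤ n → g.next^[a] i = g.next^[b] i → a = b := by
    intro a b ha hb heq
    rcases lt_trichotomy a b with h | h | h
    · exact absurd heq (haux a b h hb)
    · exact h
    · exact absurd heq.symm (haux b a h ha)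
  have hAdj : ∀ m < n, G.Adj (g.next^[m] i) (g.next^[m+1] i) := by
    intro m hm; rw [hPsucc]; exact g.adj_of_not_sink _ (hPnotW m hm)
  -- the new sink set and new graph
  set W' : Finset V := insert i (W.erase s) with hW'def
  have hiW'e : i ∉ W.erase s := fun h => hiW (mem_of_mem_erase h)
  have hcard : W'.card = W.card := by
    rw [hW'def, card_insert_of_notMem hiW'e, card_erase_of_mem hs]
    have : 0 < W.card := card_pos.2 ⟨s, hs⟩
    omega
  set F := revNext g.next i n with hFdef
  have hFP : ∀ m, 1 ≤ m → m ≤ n → F (g.next^[m] i) = g.next^[m - 1] i := by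
    intro m h1 h2
    have h : ∃ m' ∈ Finset.Icc 1 n, g.next^[m'] i = g.next^[m] i :=
      ⟨m, mem_Icc.2 ⟨h1, h2⟩, rfl⟩
    rw [hFdef, revNext_pos _ _ _ _ h]
    obtain ⟨hm', heq'⟩ := h.choose_spec
    rw [mem_Icc] at hm'
    rw [hPinj _ m (by omega) h2 heq']
  have hnotpath_i : ¬ ∃ m ∈ Finset.Icc 1 n, g.next^[m] i = i := by
    rintro ⟨m, hm, heq⟩
    rw [mem_Icc] at hm
    have := hPinj m 0 hm.2 (by omega) heq
    omega
  have hFi : F i = i := revNext_i _ _ _ hnotpath_i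
  have hFoff : ∀ v, (¬ ∃ m ∈ Finset.Icc 1 n, g.next^[m] i = v) → v ≠ i → F v = g.next v :=
    fun v h hv => revNext_neg _ _ _ _ h hv
  -- iterating F down the path reaches i
  have hFiter : ∀ m, m ≤ n → F^[m] (g.next^[m] i) = i := by
    intro m
    induction m with
    | zero => intro _; rfl
    | succ m ih =>
      intro hm
      rw [Function.iterate_succ_apply, hFP (m+1) (by omega) hm]
      simpa using ih (by omega)
  -- the new W-graph
  have hg'adj : ∀ v ∉ W', G.Adj v (F v) := by
    intro v hv
    by_cases h : ∃ m ∈ Finset.Icc 1 n, g.next^[m] i = v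
    · obtain ⟨m, hm, rfl⟩ := h
      rw [mem_Icc] at hm
      rw [hFP m hm.1 hm.2]
      have h2 := hAdj (m-1) (by omega)
      rw [show m - 1 + 1 = m by omega] at h2
      exact h2.symm
    · have hvi : v ≠ i := fun h' => hv (h' ▸ mem_insert_self i _)
      rw [hFoff v h hvi]
      apply g.adj_of_not_sink
      intro hvW
      have hvs : v = s := by
        by_contra hvs
        exact hv (mem_insert_of_mem (mem_erase.2 ⟨hvs, hvW⟩))
      exact h ⟨n, mem_Icc.2 ⟨hnpos, le_refl n⟩, hvs ▸ hn⟩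
  have hg'fix : ∀ v ∈ W', F v = v := by
    intro v hv
    rcases mem_insert.1 hv with rfl | hv
    · exact hFi
    · obtain ⟨hvs, hvW⟩ := mem_erase.1 hv
      rw [hFoff v _ (fun h' => hiW (h' ▸ hvW))]
      · exact g.sink_fixed v hvW
      · rintro ⟨m, hm, rfl⟩
        rw [mem_Icc] at hm
        rcases eq_or_lt_of_le hm.2 with h | h
        · exact hvs (h ▸ hn ▸ rfl)
        · exact hPnotW m h hvW
  have hg'abs : ∀ v : V, ∃ m : ℕ, F^[m] v ∈ W' := by
    have key : ∀ N v, g.next^[N] v ∈ W → ∃ m, F^[m] v ∈ W' := by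
      intro N
      induction N with
      | zero =>
        intro v hv
        by_cases hvs : v = s
        · exact ⟨n, by rw [hvs, ← hn, hFiter n le_rfl]; exact mem_insert_self i _⟩
        · exact ⟨0, mem_insert_of_mem (mem_erase.2 ⟨hvs, hv⟩)⟩
      | succ N ih =>
        intro v hv
        by_cases hpath : ∃ m ∈ Finset.Icc 1 n, g.next^[m] i = v
        · obtain ⟨m, hm, rfl⟩ := hpath
          rw [mem_Icc] at hm
          exact ⟨m, by rw [hFiter m hm.2]; exact mem_insert_self i _⟩
        · by_cases hvi : v = i
          · exact ⟨0, by rw [hvi]; exact mem_insert_self i _⟩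
          · by_cases hvW : v ∈ W
            · have hvs : v ≠ s := fun h' =>
                hpath ⟨n, mem_Icc.2 ⟨hnpos, le_rfl⟩, h' ▸ hn⟩
              exact ⟨0, mem_insert_of_mem (mem_erase.2 ⟨hvs, hvW⟩)⟩
            · rw [Function.iterate_succ_apply] at hv
              obtain ⟨m, hm⟩ := ih (g.next v) hv
              exact ⟨m + 1, by rw [Function.iterate_succ_apply, hFoff v hpath hvi]; exact hm⟩
    intro v
    obtain ⟨N, hN⟩ := g.absorbed v
    exact key N v hN
  set g' : WGraph G W' := ⟨F, hg'adj, hg'fix, hg'abs⟩ with hg'def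
  have hg'next : g'.next = F := rfl
  -- cost comparison
  have hopt2 := hopt.2 W' g' (hcard.trans hopt.1)
  suffices hkey : wcost Ve Vp g' = wcost Ve Vp g + (Vp i - Vp s) by
    rw [hkey] at hopt2; linarith
  have hW'c : W'ᶜ = insert s (Wᶜ.erase i) := by
    ext v
    simp only [hW'def, mem_compl, mem_insert, mem_erase]
    push_neg
    constructor
    · rintro ⟨hvi, hv⟩
      by_cases hvs : v = s
      · exact Or.inl hvs
      · exact Or.inr ⟨hvi, hv hvs⟩
    · rintro (rfl | ⟨hvi, hvW⟩)
      · exact ⟨hsi, fun h => absurd rfl h⟩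
      · exact ⟨hvi, fun _ => hvW⟩
  have hsQ : s ∉ Wᶜ.erase i := fun h => (mem_compl.1 (mem_of_mem_erase h)) hs
  have hw' : wcost Ve Vp g' = (Ve s(s, F s) - Vp s) + ∑ v ∈ Wᶜ.erase i, (Ve s(v, F v) - Vp v) := by
    rw [wcost, hg'next, hW'c, sum_insert hsQ]
  have hw : wcost Ve Vp g = (Ve s(i, g.next i) - Vp i)
      + ∑ v ∈ Wᶜ.erase i, (Ve s(v, g.next v) - Vp v) := by
    rw [wcost]
    exact (Finset.add_sum_erase _ (fun v => Ve s(v, g.next v) - Vp v) (mem_compl.2 hiW)).symm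
  -- the path interior
  set Q : Finset V := (Finset.range (n-1)).image (fun j => g.next^[j+1] i) with hQdef
  have hQsub : Q ⊆ Wᶜ.erase i := by
    intro v hv
    rw [hQdef, mem_image] at hv
    obtain ⟨j, hj, rfl⟩ := hv
    rw [mem_range] at hj
    refine mem_erase.2 ⟨?_, mem_compl.2 (hPnotW (j+1) (by omega))⟩
    intro h
    have := hPinj (j+1) 0 (by omega) (by omega) (h.trans hP0.symm)
    omega
  have hsum2 : ∑ v ∈ Wᶜ.erase i, ((Ve s(v, F v) - Vp v) - (Ve s(v, g.next v) - Vp v))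
      = ∑ v ∈ Q, ((Ve s(v, F v) - Vp v) - (Ve s(v, g.next v) - Vp v)) := by
    refine (Finset.sum_subset hQsub ?_).symm
    intro v hv hvQ
    obtain ⟨hvi, hvc⟩ := mem_erase.1 hv
    have hF : F v = g.next v := by
      refine hFoff v ?_ hvi
      rintro ⟨m, hm, rfl⟩
      rw [mem_Icc] at hm
      rcases eq_or_lt_of_le hm.2 with h | h
      · exact (mem_compl.1 hvc) (by rw [h, hn]; exact hs)
      · refine hvQ (mem_image.2 ⟨m - 1, mem_range.2 (by omega), ?_⟩)
        congr 1; omega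
    rw [hF]; ring
  have hsum3 : ∑ v ∈ Q, ((Ve s(v, F v) - Vp v) - (Ve s(v, g.next v) - Vp v))
      = ∑ j ∈ Finset.range (n-1),
          (Ve s(g.next^[j] i, g.next^[j+1] i) - Ve s(g.next^[j+1] i, g.next^[j+2] i)) := by
    rw [hQdef, Finset.sum_image]
    · refine Finset.sum_congr rfl ?_
      intro j hj
      rw [mem_range] at hj
      have h1 : F (g.next^[j+1] i) = g.next^[j] i := by
        rw [hFP (j+1) (by omega) (by omega)]; simp
      have h2 : g.next (g.next^[j+1] i) = g.next^[j+2] i := (hPsucc (j+1)).symm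
      rw [h1, h2, Sym2.eq_swap]
      ring
    · intro j hj j' hj' heq
      rw [mem_coe, mem_range] at hj hj'
      have := hPinj (j+1) (j'+1) (by omega) (by omega) heq
      omega
  have htel : ∑ j ∈ Finset.range (n-1),
      (Ve s(g.next^[j] i, g.next^[j+1] i) - Ve s(g.next^[j+1] i, g.next^[j+2] i))
      = Ve s(g.next^[0] i, g.next^[1] i)
        - Ve s(g.next^[n-1] i, g.next^[n-1+1] i) := by
    exact Finset.sum_range_sub' (fun j => Ve s(g.next^[j] i, g.next^[j+1] i)) (n-1)
  have hFs : Ve s(s, F s) = Ve s(g.next^[n-1] i, g.next^[n-1+1] i) := by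
    have h1 : n - 1 + 1 = n := by omega
    rw [h1, ← hn, hFP n hnpos le_rfl, Sym2.eq_swap]
  have hfi : Ve s(i, g.next i) = Ve s(g.next^[0] i, g.next^[1] i) := by
    simp
  have hsum4 : ∑ v ∈ Wᶜ.erase i, (Ve s(v, F v) - Vp v)
      = ∑ v ∈ Wᶜ.erase i, (Ve s(v, g.next v) - Vp v)
        + (Ve s(g.next^[0] i, g.next^[1] i) - Ve s(g.next^[n-1] i, g.next^[n-1+1] i)) := by
    have := hsum2.trans (hsum3.trans htel)
    rw [Finset.sum_sub_distrib] at this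
    linarith
  rw [hw', hw, hsum4, hFs, hfi]
  ring
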